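/- Let h ≥ 1 and ℓ ≥ 3 be integers and set n := 2hℓ. Let G be the graph obtained from the vertex-disjoint union of a complete graph on hℓ − 1 vertices and a complete graph on hℓ + 1 vertices by adding a matching of size 2 between them (two disjoint edges, each having one endpoint in each clique). Then G is Hamiltonian, δ(G) ≥ n/2 − 2, and G contains no 2-factor consisting of exactly 2h cycles all of length ℓ. -/

import Mathlib

open SimpleGraph

/-- `C` is a Hamilton cycle on its (whole) vertex set: a connected 2-regular graph. -/
def IsHamCycleOn {V : Type*} (C : SimpleGraph V) : Prop :=
  C.Connected ∧ ∀ v : V, (C.neighborSet v).ncard = 2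

/-- `H` is a 2-factor of `G`: a spanning 2-regular subgraph of `G`
(viewed as a graph on the same vertex set). -/
def IsTwoFactor {V : Type*} (G H : SimpleGraph V) : Prop :=
  H ≤ G ∧ ∀ v : V, (H.neighborSet v).ncard = 2

/-- The base relation for the example graph: two disjoint cliques, of orders `hℓ - 1`
and `hℓ + 1`, joined by the matching `{(inl 0, inr 0), (inl 1, inr 1)}`. -/
def exRel (h ℓ : ℕ) : (Fin (h * ℓ - 1) ⊕ Fin (h * ℓ + 1)) →
    (Fin (h * ℓ - 1) ⊕ Fin (h * ℓ + 1)) → Prop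
  | Sum.inl _, Sum.inl _ => True
  | Sum.inr _, Sum.inr _ => True
  | Sum.inl a, Sum.inr b => (a.val = 0 ∧ b.val = 0) ∨ (a.val = 1 ∧ b.val = 1)
  | Sum.inr _, Sum.inl _ => False

/-- The example graph: disjoint copies of `K_{hℓ-1}` and `K_{hℓ+1}` joined by a matching
of size 2. -/
def exGraph (h ℓ : ℕ) : SimpleGraph (Fin (h * ℓ - 1) ⊕ Fin (h * ℓ + 1)) :=
  SimpleGraph.fromRel (exRel h ℓ)

abbrev Vt (h ℓ : ℕ) := Fin (h * ℓ - 1) ⊕ Fin (h * ℓ + 1)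

lemma exGraph_adj_ll {h ℓ : ℕ} {a b : Fin (h * ℓ - 1)} (hab : a.val ≠ b.val) :
    (exGraph h ℓ).Adj (Sum.inl a) (Sum.inl b) :=
  ⟨by simp [Fin.ext_iff, hab], Or.inl trivial⟩

lemma exGraph_adj_rr {h ℓ : ℕ} {a b : Fin (h * ℓ + 1)} (hab : a.val ≠ b.val) :
    (exGraph h ℓ).Adj (Sum.inr a) (Sum.inr b) :=
  ⟨by simp [Fin.ext_iff, hab], Or.inl trivial⟩

lemma exGraph_adj_lr0 {h ℓ : ℕ} {a : Fin (h * ℓ - 1)} {b : Fin (h * ℓ + 1)}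
    (ha : a.val = 0) (hb : b.val = 0) : (exGraph h ℓ).Adj (Sum.inl a) (Sum.inr b) :=
  ⟨by simp, Or.inl (Or.inl ⟨ha, hb⟩)⟩

lemma exGraph_adj_lr1 {h ℓ : ℕ} {a : Fin (h * ℓ - 1)} {b : Fin (h * ℓ + 1)}
    (ha : a.val = 1) (hb : b.val = 1) : (exGraph h ℓ).Adj (Sum.inl a) (Sum.inr b) :=
  ⟨by simp, Or.inl (Or.inr ⟨ha, hb⟩)⟩

lemma exGraph_adj_rl0 {h ℓ : ℕ} {a : Fin (h * ℓ - 1)} {b : Fin (h * ℓ + 1)}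
    (ha : a.val = 0) (hb : b.val = 0) : (exGraph h ℓ).Adj (Sum.inr b) (Sum.inl a) :=
  (exGraph_adj_lr0 ha hb).symm

lemma cross_adj {h ℓ : ℕ} {H : SimpleGraph (Vt h ℓ)} (hle : H ≤ exGraph h ℓ)
    {a : Fin (h * ℓ - 1)} {b : Fin (h * ℓ + 1)} (hadj : H.Adj (Sum.inl a) (Sum.inr b)) :
    (a.val = 0 ∧ b.val = 0) ∨ (a.val = 1 ∧ b.val = 1) := by
  have h2 := (hle hadj).2
  rcases h2 with h2 | h2
  · exact h2
  · exact h2.elim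

/-- explicit Hamilton-cycle vertex ordering -/
def hamF (h ℓ : ℕ) (hm : 3 ≤ h * ℓ) (i : ℕ) : Vt h ℓ :=
  if i = 0 then Sum.inl ⟨0, by omega⟩
  else if h2 : i + 3 ≤ h * ℓ then Sum.inl ⟨i + 1, by omega⟩
  else if i = h * ℓ - 2 then Sum.inl ⟨1, by omega⟩
  else if h4 : i + 1 ≤ 2 * (h * ℓ) - 1 then Sum.inr ⟨i + 2 - h * ℓ, by omega⟩
  else Sum.inr ⟨0, by omega⟩

lemma hamF_inj (h ℓ : ℕ) (hm : 3 ≤ h * ℓ) {i j : ℕ} (hi : i < 2 * (h * ℓ))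
    (hj : j < 2 * (h * ℓ)) (hij : hamF h ℓ hm i = hamF h ℓ hm j) : i = j := by
  unfold hamF at hij
  split_ifs at hij <;>
    simp only [Sum.inl.injEq, Sum.inr.injEq, Fin.mk.injEq] at hij <;> omega

lemma hamF_adj (h ℓ : ℕ) (hm : 3 ≤ h * ℓ) {i j : ℕ} (hi : i < 2 * (h * ℓ))
    (hj : j < 2 * (h * ℓ)) (hrel : j = i + 1 ∨ (i = 2 * (h * ℓ) - 1 ∧ j = 0)) :
    (exGraph h ℓ).Adj (hamF h ℓ hm i) (hamF h ℓ hm j) := by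
  unfold hamF
  split_ifs <;>
    first
      | (exfalso; omega)
      | (apply exGraph_adj_ll; simp only [Fin.val_mk]; omega)
      | (apply exGraph_adj_rr; simp only [Fin.val_mk]; omega)
      | (apply exGraph_adj_lr0 <;> simp only [Fin.val_mk] <;> omega)
      | (apply exGraph_adj_rl0 <;> simp only [Fin.val_mk] <;> omega)
      | (apply exGraph_adj_lr1 <;> simp only [Fin.val_mk] <;> omega)

section
variable {h ℓ : ℕ}

lemma part1 (h ℓ : ℕ) (hm : 3 ≤ h * ℓ) :
    ∃ C : SimpleGraph (Fin (h * ℓ - 1) ⊕ Fin (h * ℓ + 1)),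
      C ≤ exGraph h ℓ ∧ IsHamCycleOn C := by
  set n := 2 * (h * ℓ) - 3 with hn
  have hn3 : n + 3 = 2 * (h * ℓ) := by omega
  set f : Fin (n + 3) → Vt h ℓ := fun i => hamF h ℓ hm i.val with hf
  have hinj : Function.Injective f := by
    intro i j hij
    exact Fin.ext (hamF_inj h ℓ hm (by omega) (by omega) hij)
  have hsurj : Function.Surjective f := by
    have hbij := (Fintype.bijective_iff_injective_and_card f).2
      ⟨hinj, by simp [Fintype.card_sum]; omega⟩
    exact hbij.2
  have hkey : ∀ i j : Fin (n + 3), (j - i).val = 1 →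
      (exGraph h ℓ).Adj (f i) (f j) := by
    intro i j hd
    have hi := i.isLt; have hj := j.isLt
    rcases le_or_gt i j with hle | hlt
    · have hh : (j - i).val = j.val - i.val := Fin.coe_sub_iff_le.mpr hle
      have hle' : i.val ≤ j.val := hle
      exact hamF_adj h ℓ hm (by omega) (by omega) (Or.inl (by omega))
    · have hh : (j - i).val = (n + 3) + j.val - i.val := Fin.coe_sub_iff_lt.mpr hlt
      have hlt' : j.val < i.val := hlt
      exact hamF_adj h ℓ hm (by omega) (by omega) (Or.inr ⟨by omega, by omega⟩)
  refine ⟨(cycleGraph (n + 3)).map (⟨f, hinj⟩ : Fin (n + 3) ↪ Vt h ℓ), ?_, ?_, ?_⟩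
  · rintro x y ⟨-, i, j, hadj, rfl, rfl⟩
    rw [cycleGraph_adj'] at hadj
    rcases hadj with hd | hd
    · exact (hkey j i hd).symm
    · exact hkey i j hd
  · constructor
    · intro x y
      obtain ⟨i, rfl⟩ := hsurj x
      obtain ⟨j, rfl⟩ := hsurj y
      have hmap : ∀ {a b : Fin (n + 3)}, (cycleGraph (n + 3)).Walk a b →
          ((cycleGraph (n + 3)).map (⟨f, hinj⟩ : Fin (n + 3) ↪ Vt h ℓ)).Reachable (f a) (f b) := by
        intro a b w
        induction w with
        | nil => exact Reachable.refl _
        | cons hadj p ih =>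
          exact (SimpleGraph.Adj.reachable
            ((SimpleGraph.map_adj _ _ _ _).mpr ⟨_, _, hadj, rfl, rfl⟩)).trans ih
      exact (cycleGraph_preconnected i j).elim fun w => hmap w
  · intro x
    obtain ⟨i, rfl⟩ := hsurj x
    have hset : ((cycleGraph (n + 3)).map (⟨f, hinj⟩ : Fin (n + 3) ↪ Vt h ℓ)).neighborSet (f i)
        = f '' ((cycleGraph (n + 3)).neighborSet i) := by
      ext y
      simp only [mem_neighborSet, SimpleGraph.map_adj, Set.mem_image,
        Function.Embedding.coeFn_mk]
      constructor
      · rintro ⟨-, a, b, hab, ha, rfl⟩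
        exact ⟨b, (hinj ha) ▸ hab, rfl⟩
      · rintro ⟨b, hb, rfl⟩
        exact ⟨hinj.ne hb.ne, i, b, hb, rfl, rfl⟩
    rw [hset, Set.ncard_image_of_injective _ hinj]
    have hns : (cycleGraph (n + 3)).neighborSet i = {i - 1, i + 1} :=
      cycleGraph_neighborSet (n := n + 1)
    rw [hns]
    refine Set.ncard_pair ?_
    intro hcon
    have h2 : (i + 1) - (i - 1) = 0 := sub_eq_zero.mpr hcon.symm
    have h2' : (i + 1) - (i - 1) = 2 := by abel
    rw [h2'] at h2
    have hv : ((2 : Fin (n + 3)) : ℕ) = 0 := by rw [h2]; rfl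
    rw [Fin.val_two] at hv
    omega

end

lemma part2 (h ℓ : ℕ) (hm : 3 ≤ h * ℓ) (x : Vt h ℓ) :
    h * ℓ - 2 ≤ ((exGraph h ℓ).neighborSet x).ncard := by
  classical
  cases x with
  | inl a =>
    have hsub : (Sum.inl '' ({a}ᶜ : Set (Fin (h * ℓ - 1)))) ⊆
        (exGraph h ℓ).neighborSet (Sum.inl a) := by
      rintro _ ⟨b, hb, rfl⟩
      exact SimpleGraph.mem_neighborSet .. |>.mpr (exGraph_adj_ll (fun hv => hb (Fin.ext hv.symm)))
    have h1 : ({a}ᶜ : Set (Fin (h * ℓ - 1))).ncard = h * ℓ - 2 := by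
      rw [Set.ncard_eq_toFinset_card']
      simp only [Set.toFinset_compl, Set.toFinset_singleton, Finset.card_compl,
        Finset.card_singleton, Fintype.card_fin]
      omega
    calc h * ℓ - 2 = (Sum.inl '' ({a}ᶜ : Set (Fin (h * ℓ - 1)))).ncard := by
          rw [Set.ncard_image_of_injective _ Sum.inl_injective, h1]
      _ ≤ _ := Set.ncard_le_ncard hsub (Set.toFinite _)
  | inr b =>
    have hsub : (Sum.inr '' ({b}ᶜ : Set (Fin (h * ℓ + 1)))) ⊆
        (exGraph h ℓ).neighborSet (Sum.inr b) := by
      rintro _ ⟨c, hc, rfl⟩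
      exact SimpleGraph.mem_neighborSet .. |>.mpr (exGraph_adj_rr (fun hv => hc (Fin.ext hv.symm)))
    have h1 : ({b}ᶜ : Set (Fin (h * ℓ + 1))).ncard = h * ℓ := by
      rw [Set.ncard_eq_toFinset_card']
      simp only [Set.toFinset_compl, Set.toFinset_singleton, Finset.card_compl,
        Finset.card_singleton, Fintype.card_fin]
      omega
    calc h * ℓ - 2 ≤ h * ℓ := by omega
      _ = (Sum.inr '' ({b}ᶜ : Set (Fin (h * ℓ + 1)))).ncard := by
          rw [Set.ncard_image_of_injective _ Sum.inr_injective, h1]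
      _ ≤ _ := Set.ncard_le_ncard hsub (Set.toFinite _)

lemma even_sum_adj {h ℓ : ℕ} (H : SimpleGraph (Vt h ℓ)) (S : Finset (Vt h ℓ))
    [DecidableRel H.Adj] : Even (∑ v ∈ S, (S.filter (H.Adj v)).card) := by
  classical
  set o : Vt h ℓ → ℕ := Sum.elim (fun a => a.val) (fun b => h * ℓ + b.val) with ho
  have hoinj : ∀ v w : Vt h ℓ, H.Adj v w → o v ≠ o w := by
    intro v w hvw heq
    apply H.ne_of_adj hvw
    rcases v with a | a <;> rcases w with b | b <;>
      simp only [ho, Sum.elim_inl, Sum.elim_inr] at heq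
    · exact congrArg Sum.inl (Fin.ext heq)
    · exact absurd heq (by have := a.isLt; omega)
    · exact absurd heq (by have := b.isLt; omega)
    · exact congrArg Sum.inr (Fin.ext (by omega))
  have key : ∀ v ∈ S, (S.filter (H.Adj v)).card
      = (∑ w ∈ S, if H.Adj v w ∧ o v < o w then 1 else 0)
        + (∑ w ∈ S, if H.Adj v w ∧ o w < o v then 1 else 0) := by
    intro v _
    rw [Finset.card_filter, ← Finset.sum_add_distrib]
    refine Finset.sum_congr rfl fun w _ => ?_
    by_cases hvw : H.Adj v w
    · have hne := hoinj v w hvw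
      rcases Nat.lt_or_ge (o v) (o w) with hlt | hge
      · rw [if_pos hvw, if_pos ⟨hvw, hlt⟩, if_neg (fun hc => absurd hc.2 (by omega))]
      · have hgt : o w < o v := by omega
        rw [if_pos hvw, if_neg (fun hc => absurd hc.2 (by omega)), if_pos ⟨hvw, hgt⟩]
    · rw [if_neg hvw, if_neg (fun hc => hvw hc.1), if_neg (fun hc => hvw hc.1)]
  rw [Finset.sum_congr rfl key, Finset.sum_add_distrib]
  have hswap : (∑ v ∈ S, ∑ w ∈ S, if H.Adj v w ∧ o w < o v then 1 else 0)
      = (∑ v ∈ S, ∑ w ∈ S, if H.Adj v w ∧ o v < o w then 1 else 0) := by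
    rw [Finset.sum_comm]
    refine Finset.sum_congr rfl fun x _ => Finset.sum_congr rfl fun y _ => ?_
    exact if_congr (and_congr_left' (adj_comm H y x)) rfl rfl
  rw [hswap]
  exact Even.add_self _

lemma walk_cross {h ℓ : ℕ} {H : SimpleGraph (Vt h ℓ)} {u v : Vt h ℓ} (p : H.Walk u v) :
    ∀ (a : Fin (h * ℓ - 1)) (b : Fin (h * ℓ + 1)), u = Sum.inl a → v = Sum.inr b →
      ∃ a' b', H.Adj (Sum.inl a') (Sum.inr b') ∧ H.Reachable (Sum.inl a) (Sum.inl a') := by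
  induction p with
  | nil =>
    intro a b ha hb
    rw [ha] at hb
    exact absurd hb (by simp)
  | @cons x m y hxm p ih =>
    intro a b ha hb
    subst ha
    rcases m with a2 | b2
    · obtain ⟨a', b', hadj, hr⟩ := ih a2 b rfl hb
      exact ⟨a', b', hadj, (hxm.reachable).trans hr⟩
    · exact ⟨a, b2, hxm, Reachable.refl _⟩

open Classical in
/-- number of right-side vertices in a component -/
noncomputable def Rcnt {h ℓ : ℕ} (H : SimpleGraph (Vt h ℓ)) (c : H.ConnectedComponent) : ℕ :=
  (Finset.univ.filter (fun v : Vt h ℓ =>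
    H.connectedComponentMk v = c ∧ ¬(Sum.isLeft v = true))).card

open Classical in
/-- number of left-side vertices in a component -/
noncomputable def Lcnt {h ℓ : ℕ} (H : SimpleGraph (Vt h ℓ)) (c : H.ConnectedComponent) : ℕ :=
  (Finset.univ.filter (fun v : Vt h ℓ =>
    H.connectedComponentMk v = c ∧ Sum.isLeft v = true)).card

lemma no_one_right {h ℓ : ℕ} {H : SimpleGraph (Vt h ℓ)} (hle : H ≤ exGraph h ℓ)
    (hdeg : ∀ v, (H.neighborSet v).ncard = 2) (c : H.ConnectedComponent)
    (hcard : Rcnt H c = 1) : False := by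
  classical
  unfold Rcnt at hcard
  obtain ⟨w, hw⟩ := Finset.card_eq_one.mp hcard
  have hwmem : w ∈ Finset.univ.filter (fun v : Vt h ℓ =>
      H.connectedComponentMk v = c ∧ ¬(Sum.isLeft v = true)) := by
    rw [hw]; exact Finset.mem_singleton_self w
  rw [Finset.mem_filter] at hwmem
  obtain ⟨-, hwc, hwr⟩ := hwmem
  obtain ⟨bw, rfl⟩ : ∃ bw, w = Sum.inr bw := by
    rcases w with aw | bw
    · simp at hwr
    · exact ⟨bw, rfl⟩
  obtain ⟨x, y, hxy, hset⟩ := Set.ncard_eq_two.mp (hdeg (Sum.inr bw))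
  have hx : H.Adj (Sum.inr bw) x := by
    have : x ∈ H.neighborSet (Sum.inr bw) := by rw [hset]; simp
    exact this
  have hy : H.Adj (Sum.inr bw) y := by
    have : y ∈ H.neighborSet (Sum.inr bw) := by rw [hset]; simp
    exact this
  have hleft : ∀ z, H.Adj (Sum.inr bw) z → ∃ az, z = Sum.inl az := by
    intro z hz
    rcases z with az | bz
    · exact ⟨az, rfl⟩
    · exfalso
      have hzmem : Sum.inr bz ∈ Finset.univ.filter (fun v : Vt h ℓ =>
          H.connectedComponentMk v = c ∧ ¬(Sum.isLeft v = true)) := by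
        rw [Finset.mem_filter]
        exact ⟨Finset.mem_univ _,
          ((ConnectedComponent.connectedComponentMk_eq_of_adj (G := H) hz).symm).trans hwc, by simp⟩
      rw [hw, Finset.mem_singleton] at hzmem
      rw [hzmem] at hz
      exact H.loopless.irrefl _ hz
  obtain ⟨ax, rfl⟩ := hleft x hx
  obtain ⟨ay, rfl⟩ := hleft y hy
  rcases cross_adj hle hx.symm with ⟨hax, hbw⟩ | ⟨hax, hbw⟩ <;>
    rcases cross_adj hle hy.symm with ⟨hay, hbw'⟩ | ⟨hay, hbw'⟩
  · exact hxy (congrArg Sum.inl (Fin.ext (by omega)))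
  · omega
  · omega
  · exact hxy (congrArg Sum.inl (Fin.ext (by omega)))

lemma parity_contra {h ℓ : ℕ} {H : SimpleGraph (Vt h ℓ)}
    (hle : H ≤ exGraph h ℓ) (hdeg : ∀ v, (H.neighborSet v).ncard = 2)
    {a0 a1 : Fin (h * ℓ - 1)} (h0 : a0.val = 0) (h1 : a1.val = 1)
    (hne : H.connectedComponentMk (Sum.inl a1) ≠ H.connectedComponentMk (Sum.inl a0))
    (hR : 2 ≤ Rcnt H (H.connectedComponentMk (Sum.inl a0))) : False := by
  classical
  set c0 := H.connectedComponentMk (Sum.inl a0) with hc0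
  unfold Rcnt at hR
  set S := Finset.univ.filter (fun v : Vt h ℓ =>
    H.connectedComponentMk v = c0 ∧ ¬(Sum.isLeft v = true)) with hS
  -- find the crossing edge at a0
  obtain ⟨w, hw⟩ : S.Nonempty := Finset.card_pos.mp (by omega)
  rw [hS, Finset.mem_filter] at hw
  obtain ⟨-, hwc, hwr⟩ := hw
  obtain ⟨bw, rfl⟩ : ∃ bw, w = Sum.inr bw := by
    rcases w with aw | bw
    · simp at hwr
    · exact ⟨bw, rfl⟩
  have hreach : H.Reachable (Sum.inl a0) (Sum.inr bw) :=
    ConnectedComponent.exact (by rw [hwc])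
  obtain ⟨p⟩ := hreach
  obtain ⟨a', b', hadj, hr⟩ := walk_cross p a0 bw rfl rfl
  have ha'c : H.connectedComponentMk (Sum.inl a') = c0 :=
    (ConnectedComponent.sound hr).symm
  have hb'0 : b'.val = 0 := by
    rcases cross_adj hle hadj with ⟨ha', hb'⟩ | ⟨ha', hb'⟩
    · exact hb'
    · exfalso
      apply hne
      rw [← ha'c]
      exact congrArg _ (congrArg Sum.inl (Fin.ext (by omega)))
  have ha'0 : a' = a0 := by
    rcases cross_adj hle hadj with ⟨ha', hb'⟩ | ⟨ha', hb'⟩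
    · exact Fin.ext (by omega)
    · exfalso
      apply hne
      rw [← ha'c]
      exact congrArg _ (congrArg Sum.inl (Fin.ext (by omega)))
  rw [ha'0] at hadj
  -- hadj : H.Adj (inl a0) (inr b')
  have hr0S : Sum.inr b' ∈ S := by
    rw [hS, Finset.mem_filter]
    exact ⟨Finset.mem_univ _, (ConnectedComponent.connectedComponentMk_eq_of_adj (G := H) hadj).symm, by simp⟩
  have hcard2 : ∀ v : Vt h ℓ, (Finset.univ.filter (fun z => H.Adj v z)).card = 2 := by
    intro v
    have heq : (Finset.univ.filter (fun z => H.Adj v z)) = (H.neighborSet v).toFinset := by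
      ext z; simp
    rw [heq, ← Set.ncard_eq_toFinset_card']
    exact hdeg v
  -- every vertex of S other than (inr b') has both neighbors in S
  have key1 : ∀ v ∈ S, v ≠ Sum.inr b' → (S.filter (H.Adj v)).card = 2 := by
    intro v hv hvne
    rw [hS, Finset.mem_filter] at hv
    obtain ⟨-, hvc, hvr⟩ := hv
    obtain ⟨bv, rfl⟩ : ∃ bv, v = Sum.inr bv := by
      rcases v with av | bv
      · simp at hvr
      · exact ⟨bv, rfl⟩
    have hbv : bv.val ≠ 0 := by
      intro hc
      exact hvne (congrArg Sum.inr (Fin.ext (by omega)))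
    have hfilter : S.filter (H.Adj (Sum.inr bv))
        = Finset.univ.filter (fun z => H.Adj (Sum.inr bv) z) := by
      ext z
      simp only [hS, Finset.mem_filter, Finset.mem_univ, true_and]
      constructor
      · rintro ⟨-, hz⟩; exact hz
      · intro hz
        refine ⟨⟨?_, ?_⟩, hz⟩
        · exact (ConnectedComponent.connectedComponentMk_eq_of_adj (G := H) hz).symm.trans hvc
        · rcases z with az | bz
          · exfalso
            rcases cross_adj hle hz.symm with ⟨haz, hbz⟩ | ⟨haz, hbz⟩
            · exact hbv hbz
            · apply hne
              rw [← ((ConnectedComponent.connectedComponentMk_eq_of_adj (G := H) hz).symm.trans hvc)]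
              exact congrArg _ (congrArg Sum.inl (Fin.ext (by omega)))
          · simp
    rw [hfilter, hcard2]
  -- (inr b') has exactly one neighbor in S
  obtain ⟨x, y, hxy, hset⟩ := Set.ncard_eq_two.mp (hdeg (Sum.inr b'))
  have hv0mem : (Sum.inl a0) ∈ ({x, y} : Set (Vt h ℓ)) := by
    rw [← hset]; exact hadj.symm
  obtain ⟨z, hzne, hset'⟩ : ∃ z, z ≠ Sum.inl a0 ∧
      H.neighborSet (Sum.inr b') = {Sum.inl a0, z} := by
    rcases hv0mem with hfoo | hfoo
    · exact ⟨y, fun hyc => hxy (by rw [← hfoo, hyc]), by rw [hset, ← hfoo]⟩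
    · exact ⟨x, fun hxc => hxy (hxc.trans hfoo), by rw [hset, ← hfoo, Set.pair_comm]⟩
  have hzadj : H.Adj (Sum.inr b') z := by
    have : z ∈ H.neighborSet (Sum.inr b') := by rw [hset']; simp
    exact this
  obtain ⟨bz, rfl⟩ : ∃ bz, z = Sum.inr bz := by
    rcases z with az | bz
    · exfalso
      rcases cross_adj hle hzadj.symm with ⟨haz, hbz⟩ | ⟨haz, hbz⟩
      · exact hzne (congrArg Sum.inl (Fin.ext (by omega)))
      · omega
    · exact ⟨bz, rfl⟩
  have hzS : Sum.inr bz ∈ S := by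
    rw [hS, Finset.mem_filter]
    refine ⟨Finset.mem_univ _, ?_, by simp⟩
    exact (ConnectedComponent.connectedComponentMk_eq_of_adj (G := H) hzadj).symm.trans
      (ConnectedComponent.connectedComponentMk_eq_of_adj (G := H) hadj).symm
  have key2 : S.filter (H.Adj (Sum.inr b')) = {Sum.inr bz} := by
    ext u
    simp only [Finset.mem_filter, Finset.mem_singleton]
    constructor
    · rintro ⟨huS, hadjU⟩
      have hmem' : u ∈ H.neighborSet (Sum.inr b') := hadjU
      rw [hset'] at hmem'
      rcases hmem' with rfl | rfl
      · exfalso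
        rw [hS, Finset.mem_filter] at huS
        simp at huS
      · rfl
    · rintro rfl
      exact ⟨hzS, hzadj⟩
  -- parity
  have hsum := even_sum_adj H S
  have hsplit : ∑ v ∈ S, (S.filter (H.Adj v)).card
      = ∑ v ∈ S.erase (Sum.inr b'), (S.filter (H.Adj v)).card
        + (S.filter (H.Adj (Sum.inr b'))).card :=
    (Finset.sum_erase_add S _ hr0S).symm
  have h2 : ∑ v ∈ S.erase (Sum.inr b'), (S.filter (H.Adj v)).card
      = (S.card - 1) * 2 := by
    rw [Finset.sum_congr rfl
      (fun v hv => key1 v (Finset.mem_of_mem_erase hv) (Finset.ne_of_mem_erase hv))]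
    rw [Finset.sum_const, Finset.card_erase_of_mem hr0S, smul_eq_mul]
  rw [hsplit, h2, key2, Finset.card_singleton] at hsum
  rw [Nat.even_iff] at hsum
  omega

lemma part3 (h ℓ : ℕ) (hh : 1 ≤ h) (hℓ : 3 ≤ ℓ) :
    ¬ ∃ H : SimpleGraph (Vt h ℓ), IsTwoFactor (exGraph h ℓ) H ∧
        Nat.card H.ConnectedComponent = 2 * h ∧
        ∀ c : H.ConnectedComponent, c.supp.ncard = ℓ := by
  classical
  rintro ⟨H, ⟨hle, hdeg⟩, -, hsupp⟩
  have hm : 3 ≤ h * ℓ := le_trans hℓ (Nat.le_mul_of_pos_left ℓ hh)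
  letI : Fintype H.ConnectedComponent := Fintype.ofFinite _
  obtain ⟨a0, ha0⟩ : ∃ a : Fin (h * ℓ - 1), a.val = 0 := ⟨⟨0, by omega⟩, rfl⟩
  obtain ⟨a1, ha1⟩ : ∃ a : Fin (h * ℓ - 1), a.val = 1 := ⟨⟨1, by omega⟩, rfl⟩
  set c0 := H.connectedComponentMk (Sum.inl a0) with hc0
  set c1 := H.connectedComponentMk (Sum.inl a1) with hc1
  -- each component has ℓ vertices, split into L + R
  have hLR : ∀ c, Lcnt H c + Rcnt H c = ℓ := by
    intro c
    have hs : (Finset.univ.filter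
        (fun v : Vt h ℓ => H.connectedComponentMk v = c)).card = ℓ := by
      have h1 := hsupp c
      rw [Set.ncard_eq_toFinset_card'] at h1
      have heq : Finset.univ.filter (fun v : Vt h ℓ => H.connectedComponentMk v = c)
          = c.supp.toFinset := by
        ext v
        simp [ConnectedComponent.mem_supp_iff]
      rw [heq]
      exact h1
    unfold Lcnt Rcnt
    have e1 : Finset.univ.filter
        (fun v : Vt h ℓ => H.connectedComponentMk v = c ∧ Sum.isLeft v = true)
        = (Finset.univ.filter (fun v : Vt h ℓ => H.connectedComponentMk v = c)).filter
            (fun v => Sum.isLeft v = true) := by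
      rw [Finset.filter_filter]
    have e2 : Finset.univ.filter
        (fun v : Vt h ℓ => H.connectedComponentMk v = c ∧ ¬(Sum.isLeft v = true))
        = (Finset.univ.filter (fun v : Vt h ℓ => H.connectedComponentMk v = c)).filter
            (fun v => ¬(Sum.isLeft v = true)) := by
      rw [Finset.filter_filter]
    rw [e1, e2, Finset.card_filter_add_card_filter_not]
    exact hs
  -- total number of left vertices
  have hTot : ∑ c : H.ConnectedComponent, Lcnt H c = h * ℓ - 1 := by
    have hleft : (Finset.univ.filter
        (fun v : Vt h ℓ => Sum.isLeft v = true)).card = h * ℓ - 1 := by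
      have himg : Finset.univ.filter (fun v : Vt h ℓ => Sum.isLeft v = true)
          = Finset.univ.image Sum.inl := by
        ext v; rcases v with a | b <;> simp
      rw [himg, Finset.card_image_of_injective _ Sum.inl_injective,
        Finset.card_univ, Fintype.card_fin]
    have hfib := Finset.card_eq_sum_card_fiberwise
      (f := H.connectedComponentMk)
      (s := Finset.univ.filter (fun v : Vt h ℓ => Sum.isLeft v = true))
      (t := Finset.univ) (fun x _ => Finset.mem_univ _)
    rw [hleft] at hfib
    refine (Finset.sum_congr rfl fun c _ => ?_).trans hfib.symm
    unfold Lcnt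
    rw [Finset.filter_filter]
    congr 1
    ext v
    simp only [Finset.mem_filter, Finset.mem_univ, true_and]
    tauto
  -- components other than c0, c1 are entirely on one side
  have zero_or : ∀ c : H.ConnectedComponent, c ≠ c0 → c ≠ c1 →
      Lcnt H c = 0 ∨ Lcnt H c = ℓ := by
    intro c hne0 hne1
    by_cases hA : ∃ a : Fin (h * ℓ - 1), H.connectedComponentMk (Sum.inl a) = c
    · by_cases hB : ∃ b : Fin (h * ℓ + 1), H.connectedComponentMk (Sum.inr b) = c
      · exfalso
        obtain ⟨a, ha⟩ := hA
        obtain ⟨b, hb⟩ := hB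
        obtain ⟨p⟩ : H.Reachable (Sum.inl a) (Sum.inr b) :=
          ConnectedComponent.exact (ha.trans hb.symm)
        obtain ⟨a', b', hadj, hr⟩ := walk_cross p a b rfl rfl
        have ha'c : H.connectedComponentMk (Sum.inl a') = c :=
          (ConnectedComponent.sound hr).symm.trans ha
        rcases cross_adj hle hadj with ⟨h0', -⟩ | ⟨h1', -⟩
        · apply hne0
          rw [← ha'c, hc0]
          exact congrArg _ (congrArg Sum.inl (Fin.ext (by omega)))
        · apply hne1
          rw [← ha'c, hc1]
          exact congrArg _ (congrArg Sum.inl (Fin.ext (by omega)))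
      · right
        have hRzero : Rcnt H c = 0 := by
          unfold Rcnt
          rw [Finset.card_eq_zero, Finset.filter_eq_empty_iff]
          rintro v -
          rcases v with a | b
          · rintro ⟨-, hcon⟩; exact hcon (by simp)
          · rintro ⟨hmk, -⟩; exact hB ⟨b, hmk⟩
        have := hLR c
        omega
    · left
      unfold Lcnt
      rw [Finset.card_eq_zero, Finset.filter_eq_empty_iff]
      rintro v -
      rcases v with a | b
      · rintro ⟨hmk, -⟩; exact hA ⟨a, hmk⟩
      · rintro ⟨-, hcon⟩; simp at hcon
  have hbound : ∀ c, Lcnt H c ≤ ℓ := fun c => by have := hLR c; omega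
  have hL0pos : 1 ≤ Lcnt H c0 := by
    refine Finset.card_pos.mpr ⟨Sum.inl a0, ?_⟩
    rw [Finset.mem_filter]
    exact ⟨Finset.mem_univ _, hc0.symm, by simp⟩
  have hL1pos : 1 ≤ Lcnt H c1 := by
    refine Finset.card_pos.mpr ⟨Sum.inl a1, ?_⟩
    rw [Finset.mem_filter]
    exact ⟨Finset.mem_univ _, hc1.symm, by simp⟩
  have hd1 : ℓ ∣ h * ℓ := dvd_mul_left ℓ h
  by_cases hcc : c0 = c1
  · -- inl a0 and inl a1 in the same component
    have hsum1 : ∑ c : H.ConnectedComponent, Lcnt H c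
        = Lcnt H c0 + ∑ c ∈ Finset.univ.erase c0, Lcnt H c :=
      (Finset.add_sum_erase _ _ (Finset.mem_univ c0)).symm
    obtain ⟨k, hk⟩ : ℓ ∣ ∑ c ∈ Finset.univ.erase c0, Lcnt H c :=
      Finset.dvd_sum fun c hc => by
        rcases zero_or c (Finset.ne_of_mem_erase hc)
          (fun hcon => (Finset.ne_of_mem_erase hc) (hcon.trans hcc.symm)) with hz | hz <;>
          simp [hz]
    have hkey : h * ℓ - 1 = Lcnt H c0 + ℓ * k := by
      rw [← hTot, hsum1, hk]
    obtain ⟨d, hd⟩ : ℓ ∣ Lcnt H c0 + 1 := by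
      have heq : h * ℓ - ℓ * k = Lcnt H c0 + 1 := by
        have := hbound c0; omega
      rw [← heq]
      exact Nat.dvd_sub hd1 (dvd_mul_right ℓ k)
    have hdle : d < 2 := by
      by_contra hcon
      push_neg at hcon
      have := Nat.mul_le_mul_left ℓ hcon
      have := hbound c0
      omega
    have hR0 : Rcnt H c0 = 1 := by
      have h1 := hLR c0
      have hd1' : d = 1 := by
        rcases Nat.eq_zero_or_pos d with rfl | hp
        · omega
        · omega
      rw [hd1', Nat.mul_one] at hd
      omega
    exact no_one_right hle hdeg c0 hR0
  · -- different components
    have hc1mem : c1 ∈ Finset.univ.erase c0 :=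
      Finset.mem_erase.mpr ⟨fun hcon => hcc hcon.symm, Finset.mem_univ _⟩
    have hsum1 : ∑ c : H.ConnectedComponent, Lcnt H c
        = Lcnt H c0 + (Lcnt H c1 + ∑ c ∈ (Finset.univ.erase c0).erase c1, Lcnt H c) := by
      rw [Finset.add_sum_erase _ _ hc1mem]
      exact (Finset.add_sum_erase _ _ (Finset.mem_univ c0)).symm
    obtain ⟨k, hk⟩ : ℓ ∣ ∑ c ∈ (Finset.univ.erase c0).erase c1, Lcnt H c :=
      Finset.dvd_sum fun c hc => by
        rcases zero_or c (Finset.ne_of_mem_erase (Finset.mem_of_mem_erase hc))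
          (Finset.ne_of_mem_erase hc) with hz | hz <;> simp [hz]
    have hkey : h * ℓ - 1 = Lcnt H c0 + Lcnt H c1 + ℓ * k := by
      rw [← hTot, hsum1, hk]; ring
    obtain ⟨d, hd⟩ : ℓ ∣ Lcnt H c0 + Lcnt H c1 + 1 := by
      have heq : h * ℓ - ℓ * k = Lcnt H c0 + Lcnt H c1 + 1 := by
        have := hbound c0; have := hbound c1; omega
      rw [← heq]
      exact Nat.dvd_sub hd1 (dvd_mul_right ℓ k)
    have hdle : d < 3 := by
      by_contra hcon
      push_neg at hcon
      have := Nat.mul_le_mul_left ℓ hcon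
      have := hbound c0; have := hbound c1
      omega
    have hdpos : 1 ≤ d := by
      rcases Nat.eq_zero_or_pos d with rfl | hp
      · omega
      · exact hp
    rcases (by omega : d = 1 ∨ d = 2) with rfl | rfl
    · -- Lcnt c0 + Lcnt c1 = ℓ - 1 : parity contradiction
      rw [Nat.mul_one] at hd
      by_cases hL0full : Lcnt H c0 = ℓ
      · -- then Lcnt c1 = ... impossible since Lcnt c1 ≥ 1 and sum = ℓ - 1 < ℓ + 1
        omega
      · have hRge : 2 ≤ Rcnt H c0 := by
          have := hLR c0
          omega
        exact parity_contra hle hdeg ha0 ha1 (by rw [← hc0, ← hc1]; exact hcc ∘ Eq.symm) (by rw [← hc0]; exact hRge)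
    · -- sum = 2ℓ - 1 : one of them is full, other has a single right vertex
      have hsum2 : Lcnt H c0 + Lcnt H c1 + 1 = 2 * ℓ := by omega
      by_cases hL0full : Lcnt H c0 = ℓ
      · have hR1 : Rcnt H c1 = 1 := by
          have := hLR c1; have := hbound c1; omega
        exact no_one_right hle hdeg c1 hR1
      · have hL1full : Lcnt H c1 = ℓ := by
          have := hbound c0; have := hbound c1; omega
        have hR0' : Rcnt H c0 = 1 := by
          have := hLR c0; have := hbound c0; omega
        exact no_one_right hle hdeg c0 hR0'

theorem stmt18 (h ℓ : ℕ) (hh : 1 ≤ h) (hℓ : 3 ≤ ℓ) :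
    -- G is Hamiltonian
    (∃ C : SimpleGraph (Fin (h * ℓ - 1) ⊕ Fin (h * ℓ + 1)),
      C ≤ exGraph h ℓ ∧ IsHamCycleOn C) ∧
    -- δ(G) ≥ n/2 - 2, where n = 2hℓ
    (∀ x, (2 * h * ℓ) / 2 - 2 ≤ ((exGraph h ℓ).neighborSet x).ncard) ∧
    -- G has no 2-factor consisting of exactly 2h cycles all of length ℓ
    ¬ ∃ H : SimpleGraph (Fin (h * ℓ - 1) ⊕ Fin (h * ℓ + 1)),
        IsTwoFactor (exGraph h ℓ) H ∧ Nat.card H.ConnectedComponent = 2 * h ∧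
        ∀ c : H.ConnectedComponent, c.supp.ncard = ℓ := by
  have hm : 3 ≤ h * ℓ := le_trans hℓ (Nat.le_mul_of_pos_left ℓ hh)
  refine ⟨part1 h ℓ hm, fun x => ?_, part3 h ℓ hh hℓ⟩
  have h2 : 2 * h * ℓ = 2 * (h * ℓ) := by ring
  have h3 := part2 h ℓ hm x
  omega
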